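/- For every constant σ with 0 < σ < π there exist constants C > 0 and c > 0 (depending only on σ) with the following property. Let H be a finite-dimensional complex Hilbert space with a fixed orthonormal basis ψ_1, …, ψ_m, and let ψ_good and ψ_start be unit vectors in H whose coordinates in this basis are all real, with α := ⟨ψ_good, ψ_start⟩ > 0. Let U_1 and U_2 be unitary transformations of H such that: (1) U_1 ψ_good = −ψ_good and U_1 ψ = ψ for every ψ orthogonal to ψ_good; (2) the matrix of U_2 in the basis ψ_1, …, ψ_m has real entries, U_2 ψ_start = ψ_start, and every eigenvector of U_2 orthogonal to ψ_start has eigenvalue e^{iθ} with θ ∈ [σ, 2π − σ]. Then there exists a natural number t with t ≤ C/α such that |⟨ψ_good, (U_2 U_1)^t ψ_start⟩| ≥ c. -/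

import Mathlib

open Complex

local notation "⟪" x ", " y "⟫" => (inner ℂ x y : ℂ)

/-- cosine bound on the arc. -/
lemma aux_cos {σ θ : ℝ} (hσ0 : 0 < σ) (hσπ : σ < Real.pi) (h1 : σ ≤ θ)
    (h2 : θ ≤ 2 * Real.pi - σ) : Real.cos θ ≤ Real.cos σ := by
  rcases le_total θ Real.pi with h | h
  · exact Real.cos_le_cos_of_nonneg_of_le_pi hσ0.le h h1
  · have hθ : Real.cos θ = Real.cos (2 * Real.pi - θ) := (Real.cos_two_pi_sub θ).symm
    rw [hθ]
    exact Real.cos_le_cos_of_nonneg_of_le_pi hσ0.le (by linarith) (by linarith)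

/-- Solving `(I - r U) x = y` for a unitary `U` and `0 ≤ r < 1`, with uniqueness. -/
lemma aux_solve {E : Type*} [NormedAddCommGroup E] [InnerProductSpace ℂ E]
    [FiniteDimensional ℂ E] (f : E ≃ₗᵢ[ℂ] E) {r : ℝ} (hr0 : 0 ≤ r) (hr1 : r < 1) (y : E) :
    ∃ x : E, (x - (r : ℂ) • f x = y ∧ ∀ x', x' - (r : ℂ) • f x' = y → x' = x) := by
  set L : E →ₗ[ℂ] E := LinearMap.id - (r : ℂ) • (f.toLinearEquiv.toLinearMap) with hL
  have hLa : ∀ x, L x = x - (r : ℂ) • f x := by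
    intro x
    simp [hL, LinearMap.sub_apply, LinearMap.smul_apply]
  have hker : ∀ x, L x = 0 → x = 0 := by
    intro x hx
    rw [hLa, sub_eq_zero] at hx
    by_contra hx0
    have hnx : 0 < ‖x‖ := norm_pos_iff.mpr hx0
    have : ‖x‖ = r * ‖x‖ := by
      conv_lhs => rw [hx]
      rw [norm_smul, Complex.norm_real, Real.norm_eq_abs, _root_.abs_of_nonneg hr0,
        f.norm_map]
    linarith [mul_pos (show (0:ℝ) < 1 - r by linarith) hnx,
      (by ring : (1 - r) * ‖x‖ = ‖x‖ - r * ‖x‖)]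
  have hinj : Function.Injective L := by
    intro a b hab
    have : L (a - b) = 0 := by rw [map_sub, hab, sub_self]
    have := hker _ this
    exact sub_eq_zero.mp this
  have hsurj : Function.Surjective L := LinearMap.injective_iff_surjective.mp hinj
  obtain ⟨x, hx⟩ := hsurj y
  refine ⟨x, by rw [← hLa]; exact hx, ?_⟩
  intro x' hx'
  exact hinj (by rw [hLa x', hx', hx])

set_option maxHeartbeats 1000000 in
/-- Numerical range bound for a unitary from eigenvalue bounds on the orthogonal
complement of a fixed vector. -/
lemma aux_numrange {E : Type*} [NormedAddCommGroup E] [InnerProductSpace ℂ E]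
    [FiniteDimensional ℂ E] (U : E ≃ₗᵢ[ℂ] E) (s : E) (b : ℝ) (hUs : U s = s)
    (heig : ∀ (μ : ℂ) (v : E), v ≠ 0 → U v = μ • v → ⟪s, v⟫ = 0 → μ.re ≤ b)
    (w : E) (hw : ⟪s, w⟫ = 0) : (⟪w, U w⟫).re ≤ b * ‖w‖ ^ 2 := by
  have hUs' : U.symm s = s := by
    apply U.injective; rw [U.apply_symm_apply, hUs]
  -- the invariant subspace
  set W : Submodule ℂ E := (Submodule.span ℂ {s})ᗮ with hW
  have hmemW : ∀ v : E, ⟪s, v⟫ = 0 → v ∈ W :=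
    fun v hv => Submodule.mem_orthogonal_singleton_iff_inner_left.mpr
      (by rw [← inner_conj_symm, hv, map_zero])
  have hWmem : ∀ v : E, v ∈ W → ⟪s, v⟫ = 0 := by
    intro v hv
    have := Submodule.mem_orthogonal_singleton_iff_inner_left.mp hv
    rw [← inner_conj_symm, this, map_zero]
  have hadj : ∀ a c : E, ⟪U.symm a, c⟫ = ⟪a, U c⟫ := by
    intro a c
    calc ⟪U.symm a, c⟫ = ⟪U (U.symm a), U c⟫ := (U.inner_map_map _ _).symm
    _ = ⟪a, U c⟫ := by rw [U.apply_symm_apply]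
  have hadj' : ∀ a c : E, ⟪U a, c⟫ = ⟪a, U.symm c⟫ := by
    intro a c
    calc ⟪U a, c⟫ = ⟪U a, U (U.symm c)⟫ := by rw [U.apply_symm_apply]
    _ = ⟪a, U.symm c⟫ := U.inner_map_map _ _
  have hinvU : ∀ v ∈ W, U.toLinearEquiv.toLinearMap v ∈ W := by
    intro v hv
    refine hmemW _ ?_
    show ⟪s, U v⟫ = 0
    rw [← hadj, hUs', hWmem v hv]
  have hinvU' : ∀ v ∈ W, U.symm.toLinearEquiv.toLinearMap v ∈ W := by
    intro v hv
    refine hmemW _ ?_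
    show ⟪s, U.symm v⟫ = 0
    rw [← hadj', hUs, hWmem v hv]
    
  set V : W →ₗ[ℂ] W := (U.toLinearEquiv.toLinearMap).restrict hinvU with hV
  set V' : W →ₗ[ℂ] W := (U.symm.toLinearEquiv.toLinearMap).restrict hinvU' with hV'
  set S : W →ₗ[ℂ] W := V + V' with hS
  have hScoe : ∀ u : W, ((S u : W) : E) = U (u : E) + U.symm (u : E) := by
    intro u
    simp [hS, hV, hV', LinearMap.restrict_coe_apply]
  have hVcoe : ∀ u : W, ((V u : W) : E) = U (u : E) := by
    intro u; simp [hV, LinearMap.restrict_coe_apply]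
  have hSsym : S.IsSymmetric := by
    intro u v
    rw [Submodule.coe_inner, Submodule.coe_inner, hScoe, hScoe]
    rw [inner_add_left, inner_add_right, hadj, hadj']
    ring
  have hEigs : ∀ lam : ℝ, Module.End.HasEigenvalue S (lam : ℂ) → lam ≤ 2 * b := by
    intro lam hlam
    set Esp : Submodule ℂ W := Module.End.eigenspace S (lam : ℂ) with hEsp
    haveI : Nontrivial Esp := Submodule.nontrivial_iff_ne_bot.mpr hlam
    have hVS : ∀ u : W, S (V u) = V (S u) := by
      intro u
      apply Subtype.ext
      rw [hScoe, hVcoe, hVcoe, hScoe]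
      rw [map_add, U.symm_apply_apply]
      congr 1
      rw [U.apply_symm_apply]
    have hVE : ∀ u ∈ Esp, V u ∈ Esp := by
      intro u hu
      rw [hEsp, Module.End.mem_eigenspace_iff] at hu ⊢
      rw [hVS, hu, map_smul]
    set VE : Esp →ₗ[ℂ] Esp := V.restrict hVE with hVE'
    obtain ⟨μ, hμ⟩ := Module.End.exists_eigenvalue VE
    obtain ⟨v, hv⟩ := hμ.exists_hasEigenvector
    have hv1 : VE v = μ • v := Module.End.mem_eigenspace_iff.mp hv.1
    have hv2 : v ≠ 0 := hv.2
    set v1 : E := ((v : ↥W) : E) with hv1def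
    have hv1ne : v1 ≠ 0 := by
      simp only [hv1def, ne_eq, Submodule.coe_eq_zero]
      exact hv2
    have hUv : U v1 = μ • v1 := by
      have := congrArg (fun z : Esp => ((z : W) : E)) hv1
      simp only [hVE'] at this
      rw [LinearMap.restrict_coe_apply] at this
      rw [hv1def]
      rw [show ((V (v : W) : W) : E) = U ((v : W) : E) from hVcoe _] at this
      exact this
    have hsv : ⟪s, v1⟫ = 0 := hWmem _ (v : W).2
    have hμb : μ.re ≤ b := heig μ v1 hv1ne hUv hsv
    have hμnorm : ‖μ‖ = 1 := by
      have h1 : ‖U v1‖ = ‖v1‖ := U.norm_map v1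
      rw [hUv, norm_smul] at h1
      have : ‖v1‖ ≠ 0 := norm_ne_zero_iff.mpr hv1ne
      field_simp at h1
      tauto
    have hμne : μ ≠ 0 := by
      intro h; rw [h] at hμnorm; simp at hμnorm
    have hUsymmv : U.symm v1 = μ⁻¹ • v1 := by
      have h1 : μ • U.symm v1 = v1 := by
        have := congrArg U.symm hUv
        rw [U.symm_apply_apply, map_smul] at this
        exact this.symm
      conv_rhs => rw [← h1]
      rw [smul_smul, inv_mul_cancel₀ hμne, one_smul]
    have hSv : U v1 + U.symm v1 = (lam : ℂ) • v1 := by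
      have hmem : S (v : ↥W) = (lam : ℂ) • (v : ↥W) :=
        Module.End.mem_eigenspace_iff.mp (v : ↥Esp).2
      have := congrArg (fun z : ↥W => (z : E)) hmem
      simpa only [hScoe, Submodule.coe_smul] using this
    have hμsum : μ + μ⁻¹ = (lam : ℂ) := by
      rw [hUv, hUsymmv, ← add_smul] at hSv
      have h0 : (μ + μ⁻¹ - (lam : ℂ)) • v1 = 0 := by rw [sub_smul, hSv, sub_self]
      rcases smul_eq_zero.mp h0 with h | h
      · exact sub_eq_zero.mp h
      · exact absurd h hv1ne
    have hμinv : μ⁻¹ = (starRingEnd ℂ) μ := Complex.inv_eq_conj hμnorm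
    rw [hμinv, Complex.add_conj] at hμsum
    have : 2 * μ.re = lam := by exact_mod_cast hμsum
    linarith
  -- expand in the eigenbasis of S
  have key : ∀ u : W, (⟪u, S u⟫).re ≤ 2 * b * ‖u‖ ^ 2 := by
    intro u
    set n := Module.finrank ℂ W with hn
    set B := hSsym.eigenvectorBasis rfl with hB
    set lam := hSsym.eigenvalues (rfl : Module.finrank ℂ W = n) with hlam
    have hrepr : ∀ i, B.repr (S u) i = lam i * B.repr u i := fun i =>
      hSsym.eigenvectorBasis_apply_self_apply rfl u i
    have hinner : ⟪u, S u⟫ = ∑ i, (starRingEnd ℂ) (B.repr u i) * (lam i * B.repr u i) := by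
      rw [← B.repr.inner_map_map u (S u), PiLp.inner_apply]
      refine Finset.sum_congr rfl fun i _ => ?_
      rw [RCLike.inner_apply, hrepr]; ring
    have hre : (⟪u, S u⟫).re = ∑ i, lam i * Complex.normSq (B.repr u i) := by
      rw [hinner, Complex.re_sum]
      refine Finset.sum_congr rfl fun i _ => ?_
      have : (starRingEnd ℂ) (B.repr u i) * (↑(lam i) * B.repr u i)
          = (lam i : ℂ) * ((starRingEnd ℂ) (B.repr u i) * B.repr u i) := by ring
      rw [this, ← Complex.normSq_eq_conj_mul_self]
      rw [← Complex.ofReal_mul, Complex.ofReal_re]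
    have hnormsum : ∑ i, Complex.normSq (B.repr u i) = ‖u‖ ^ 2 := by
      have h1 : ‖B.repr u‖ = ‖u‖ := B.repr.norm_map u
      rw [EuclideanSpace.norm_eq] at h1
      have h2 : (∑ i, ‖B.repr u i‖ ^ 2) = ‖u‖ ^ 2 := by
        rw [← h1, Real.sq_sqrt]
        positivity
      rw [← h2]
      refine Finset.sum_congr rfl fun i _ => ?_
      rw [Complex.normSq_eq_norm_sq]
    rw [hre, ← hnormsum, Finset.mul_sum]
    refine Finset.sum_le_sum fun i _ => ?_
    have hb2 : lam i ≤ 2 * b := hEigs (lam i) (hSsym.hasEigenvalue_eigenvalues rfl i)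
    have hns := Complex.normSq_nonneg (B.repr u i)
    have hmul : 0 ≤ (2 * b - lam i) * Complex.normSq (B.repr u i) :=
      mul_nonneg (by linarith) hns
    nlinarith [hmul]
  -- conclude
  set u : W := ⟨w, hmemW w hw⟩ with hu
  have huS : ⟪u, S u⟫ = ⟪w, U w⟫ + (starRingEnd ℂ) ⟪w, U w⟫ := by
    rw [Submodule.coe_inner, hScoe]
    rw [inner_add_right]
    congr 1
    show ⟪w, U.symm w⟫ = (starRingEnd ℂ) ⟪w, U w⟫
    rw [inner_conj_symm, hadj']
  have hnu : ‖u‖ = ‖w‖ := rfl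
  have := key u
  rw [huS] at this
  rw [hnu] at this
  have hre2 : (⟪w, U w⟫ + (starRingEnd ℂ) ⟪w, U w⟫).re = 2 * (⟪w, U w⟫).re := by
    rw [Complex.add_re, Complex.conj_re]; ring
  rw [hre2] at this
  linarith





/-- Coordinatewise complex conjugation with respect to an orthonormal basis. -/
noncomputable def Jc {m : ℕ} (ψ : OrthonormalBasis (Fin m) ℂ (EuclideanSpace ℂ (Fin m)))
    (z : EuclideanSpace ℂ (Fin m)) : EuclideanSpace ℂ (Fin m) :=
  ψ.repr.symm ((WithLp.equiv 2 (Fin m → ℂ)).symm (fun i => (starRingEnd ℂ) (ψ.repr z i)))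

lemma Jc_repr {m : ℕ} (ψ : OrthonormalBasis (Fin m) ℂ (EuclideanSpace ℂ (Fin m)))
    (z : EuclideanSpace ℂ (Fin m)) (i : Fin m) :
    ψ.repr (Jc ψ z) i = (starRingEnd ℂ) (ψ.repr z i) := by
  simp [Jc]

lemma Jc_inner {m : ℕ} (ψ : OrthonormalBasis (Fin m) ℂ (EuclideanSpace ℂ (Fin m)))
    (a b : EuclideanSpace ℂ (Fin m)) :
    ⟪Jc ψ a, Jc ψ b⟫ = (starRingEnd ℂ) ⟪a, b⟫ := by
  rw [← ψ.repr.inner_map_map (Jc ψ a) (Jc ψ b), ← ψ.repr.inner_map_map a b,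
    PiLp.inner_apply, PiLp.inner_apply, map_sum]
  refine Finset.sum_congr rfl fun i _ => ?_
  rw [RCLike.inner_apply, RCLike.inner_apply, Jc_repr, Jc_repr, map_mul]

lemma Jc_fix {m : ℕ} (ψ : OrthonormalBasis (Fin m) ℂ (EuclideanSpace ℂ (Fin m)))
    (z : EuclideanSpace ℂ (Fin m)) (h : ∀ i, (ψ.repr z i).im = 0) : Jc ψ z = z := by
  apply ψ.repr.injective
  ext i
  rw [Jc_repr]
  exact Complex.conj_eq_iff_im.mpr (h i)

lemma Jc_add {m : ℕ} (ψ : OrthonormalBasis (Fin m) ℂ (EuclideanSpace ℂ (Fin m)))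
    (a b : EuclideanSpace ℂ (Fin m)) : Jc ψ (a + b) = Jc ψ a + Jc ψ b := by
  apply ψ.repr.injective
  ext i
  rw [map_add]
  rw [PiLp.add_apply, Jc_repr, Jc_repr, Jc_repr, map_add, PiLp.add_apply, map_add]

lemma Jc_sub {m : ℕ} (ψ : OrthonormalBasis (Fin m) ℂ (EuclideanSpace ℂ (Fin m)))
    (a b : EuclideanSpace ℂ (Fin m)) : Jc ψ (a - b) = Jc ψ a - Jc ψ b := by
  apply ψ.repr.injective
  ext i
  rw [map_sub]
  rw [PiLp.sub_apply, Jc_repr, Jc_repr, Jc_repr, map_sub, PiLp.sub_apply, map_sub]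

lemma Jc_smul {m : ℕ} (ψ : OrthonormalBasis (Fin m) ℂ (EuclideanSpace ℂ (Fin m)))
    (c : ℂ) (a : EuclideanSpace ℂ (Fin m)) :
    Jc ψ (c • a) = (starRingEnd ℂ) c • Jc ψ a := by
  apply ψ.repr.injective
  ext i
  rw [map_smul, PiLp.smul_apply, Jc_repr, map_smul, PiLp.smul_apply, Jc_repr, smul_eq_mul,
    smul_eq_mul, map_mul]

lemma Jc_sum {m : ℕ} (ψ : OrthonormalBasis (Fin m) ℂ (EuclideanSpace ℂ (Fin m)))
    {ι : Type*} (t : Finset ι) (F : ι → EuclideanSpace ℂ (Fin m)) :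
    Jc ψ (∑ i ∈ t, F i) = ∑ i ∈ t, Jc ψ (F i) :=
  map_sum (AddMonoidHom.mk' (Jc ψ) (Jc_add ψ)) F t

set_option maxHeartbeats 16000000 in
/-- Ambainis' lemma (Lemma 3 in [Ambainis 2007]). For every constant `σ` with
`0 < σ < π` there are constants `C > 0`, `c > 0` (depending only on `σ`) such that:
for every finite-dimensional complex Hilbert space `ℂ^m` with orthonormal basis
`ψ`, unit vectors `ψgood`, `ψstart` with real coordinates in this basis and
`α := ⟨ψgood, ψstart⟩ > 0`, and unitaries `U₁`, `U₂` such that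
(1) `U₁ ψgood = -ψgood` and `U₁` fixes the orthogonal complement of `ψgood`;
(2) `U₂` has a real matrix in the basis `ψ`, `U₂ ψstart = ψstart`, and every
eigenvector of `U₂` orthogonal to `ψstart` has eigenvalue `e^{iθ}` with
`θ ∈ [σ, 2π - σ]`; then there is `t ≤ C/α` with `|⟨ψgood, (U₂U₁)^t ψstart⟩| ≥ c`. -/
theorem ambainis_amplification (σ : ℝ) (hσ0 : 0 < σ) (hσπ : σ < Real.pi) :
    ∃ C > (0 : ℝ), ∃ c > (0 : ℝ),
      ∀ (m : ℕ) (ψ : OrthonormalBasis (Fin m) ℂ (EuclideanSpace ℂ (Fin m)))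
        (ψgood ψstart : EuclideanSpace ℂ (Fin m))
        (U₁ U₂ : EuclideanSpace ℂ (Fin m) ≃ₗᵢ[ℂ] EuclideanSpace ℂ (Fin m)),
        ‖ψgood‖ = 1 → ‖ψstart‖ = 1 →
        (∀ j, (inner ℂ (ψ j) ψgood : ℂ).im = 0) →
        (∀ j, (inner ℂ (ψ j) ψstart : ℂ).im = 0) →
        0 < (inner ℂ ψgood ψstart : ℂ).re →
        U₁ ψgood = -ψgood →
        (∀ φ : EuclideanSpace ℂ (Fin m), (inner ℂ ψgood φ : ℂ) = 0 → U₁ φ = φ) →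
        (∀ i j, (inner ℂ (ψ i) (U₂ (ψ j)) : ℂ).im = 0) →
        U₂ ψstart = ψstart →
        (∀ (μ : ℂ) (v : EuclideanSpace ℂ (Fin m)), v ≠ 0 → U₂ v = μ • v →
          (inner ℂ ψstart v : ℂ) = 0 →
          ∃ θ : ℝ, σ ≤ θ ∧ θ ≤ 2 * Real.pi - σ ∧ μ = Complex.exp (θ * Complex.I)) →
        ∃ t : ℕ, (t : ℝ) ≤ C / (inner ℂ ψgood ψstart : ℂ).re ∧
          c ≤ ‖(inner ℂ ψgood ((fun x => U₂ (U₁ x))^[t] ψstart) : ℂ)‖ := by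
  have hq : 0 < 1 - Real.cos σ := by
    have h1 : Real.cos σ < Real.cos 0 :=
      Real.cos_lt_cos_of_nonneg_of_le_pi le_rfl hσπ.le hσ0
    rw [Real.cos_zero] at h1
    linarith
  set q := 1 - Real.cos σ with hqdef
  have hq2 : q ≤ 2 := by
    have := Real.neg_one_le_cos σ
    rw [hqdef]; linarith
  set K := 3 + 2 / q with hKdef
  have hK4 : 4 ≤ K := by
    have h1 : 1 ≤ 2 / q := by rw [le_div_iff₀ hq]; linarith
    rw [hKdef]; linarith
  have hK0 : 0 < K := by linarith
  refine ⟨Real.log (4 * K), Real.log_pos (by linarith), 1 / (4 * K), by positivity, ?_⟩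
  intro m ψ g s U₁ U₂ hg1 hs1 hgreal hsreal hα0 hU1g hU1perp hU2real hU2s heig
  set α := (⟪g, s⟫).re with hαdef
  rcases le_or_gt (1 / (4 * K)) α with hcase | hcase
  · -- t = 0 works
    refine ⟨0, by
      simp only [Nat.cast_zero]
      exact div_nonneg (Real.log_pos (by linarith)).le hα0.le, ?_⟩
    rw [Function.iterate_zero_apply]
    calc (1 : ℝ) / (4 * K) ≤ α := hcase
    _ ≤ ‖⟪g, s⟫‖ := by
        rw [hαdef]
        exact Complex.re_le_norm _
  -- main case
  -- real-coordinates machinery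
  have hJg : Jc ψ g = g :=
    Jc_fix ψ g fun i => by rw [ψ.repr_apply_apply]; exact hgreal i
  have hJs : Jc ψ s = s :=
    Jc_fix ψ s fun i => by rw [ψ.repr_apply_apply]; exact hsreal i
  have hgsreal : ⟪g, s⟫ = (α : ℂ) := by
    have h1 : (starRingEnd ℂ) ⟪g, s⟫ = ⟪g, s⟫ := by
      rw [← Jc_inner ψ g s, hJg, hJs]
    have him := Complex.conj_eq_iff_im.mp h1
    exact Complex.ext (by rw [Complex.ofReal_re])
      (by rw [Complex.ofReal_im]; exact him)
  have hα1 : α ≤ 1 := by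
    have h2 := norm_inner_le_norm (𝕜 := ℂ) g s
    rw [hg1, hs1] at h2
    calc α ≤ ‖⟪g, s⟫‖ := by
          rw [hαdef]; exact Complex.re_le_norm _
    _ ≤ 1 := by simpa using h2
  have hc16 : (1 : ℝ) / (4 * K) ≤ 1 / 16 := by
    apply one_div_le_one_div_of_le <;> [norm_num; linarith]
  set r := 1 - α with hrdef
  have hr0 : 0 ≤ r := by rw [hrdef]; linarith
  have hrhalf : (1 : ℝ) / 2 ≤ r := by rw [hrdef]; linarith
  have hr1 : r < 1 := by rw [hrdef]; linarith
  set R := (r : ℂ) with hRdef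
  have hU2s' : U₂.symm s = s := by
    apply U₂.injective; rw [U₂.apply_symm_apply, hU2s]
  have hadj : ∀ a c : EuclideanSpace ℂ (Fin m), ⟪U₂.symm a, c⟫ = ⟪a, U₂ c⟫ := by
    intro a c
    calc ⟪U₂.symm a, c⟫ = ⟪U₂ (U₂.symm a), U₂ c⟫ := (U₂.inner_map_map _ _).symm
    _ = ⟪a, U₂ c⟫ := by rw [U₂.apply_symm_apply]
  have hadj2 : ∀ a c : EuclideanSpace ℂ (Fin m), ⟪U₂ a, c⟫ = ⟪a, U₂.symm c⟫ := by
    intro a c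
    calc ⟪U₂ a, c⟫ = ⟪U₂ a, U₂ (U₂.symm c)⟫ := by rw [U₂.apply_symm_apply]
    _ = ⟪a, U₂.symm c⟫ := U₂.inner_map_map _ _
  have hgg : ⟪g, g⟫ = 1 := by
    rw [inner_self_eq_norm_sq_to_K, hg1]; norm_num
  have hss : ⟪s, s⟫ = 1 := by
    rw [inner_self_eq_norm_sq_to_K, hs1]; norm_num
  have hsg : ⟪s, g⟫ = (α : ℂ) := by
    rw [← inner_conj_symm s g, hgsreal, Complex.conj_ofReal]
  set gp := g - (α : ℂ) • s with hgpdef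
  have hgdecomp : g = (α : ℂ) • s + gp := by rw [hgpdef]; abel
  have hsgp : ⟪s, gp⟫ = 0 := by
    rw [hgpdef, inner_sub_right, inner_smul_right, hsg, hss]; ring
  have hgps : ⟪gp, s⟫ = 0 := by
    rw [← inner_conj_symm gp s, hsgp, map_zero]
  have hgpgp : ⟪gp, gp⟫ = ((1 - α ^ 2 : ℝ) : ℂ) := by
    rw [hgpdef]
    rw [inner_sub_left, inner_sub_right, inner_sub_right, inner_smul_left, inner_smul_right,
      inner_smul_left, inner_smul_right, hgg, hss, hgsreal, hsg, Complex.conj_ofReal]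
    push_cast; ring
  -- solve the resolvent equations
  obtain ⟨x, hx, hxuniq⟩ := aux_solve (U₁.trans U₂) hr0 hr1 s
  obtain ⟨w, hw, hwuniq⟩ := aux_solve U₂.symm hr0 hr1 gp
  set A := ⟪g, x⟫ with hAdef
  have hU1x : ∀ y, U₁ y = y - (2 * ⟪g, y⟫) • g := by
    intro y
    have h1 : ⟪g, y - ⟪g, y⟫ • g⟫ = 0 := by
      rw [inner_sub_right, inner_smul_right, hgg, mul_one, sub_self]
    have h2 := hU1perp _ h1
    have h3 : y = ⟪g, y⟫ • g + (y - ⟪g, y⟫ • g) := by abel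
    calc U₁ y = U₁ (⟪g, y⟫ • g + (y - ⟪g, y⟫ • g)) := by rw [← h3]
    _ = ⟪g, y⟫ • U₁ g + U₁ (y - ⟪g, y⟫ • g) := by rw [map_add, map_smul]
    _ = ⟪g, y⟫ • (-g) + (y - ⟪g, y⟫ • g) := by rw [hU1g, h2]
    _ = y - (2 * ⟪g, y⟫) • g := by
        rw [smul_neg, two_mul, add_smul]; abel
  have hstar : s = x - R • U₂ x + (2 * R * A) • U₂ g := by
    rw [← hx, LinearIsometryEquiv.trans_apply, hU1x x, map_sub, map_smul, ← hAdef,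
      smul_sub, smul_smul]
    have h4 : R * (2 * A) = 2 * R * A := by ring
    rw [h4]; abel
  have hsx : (1 - R) * ⟪s, x⟫ + 2 * R * A * (α : ℂ) = 1 := by
    have h1 : ⟪s, s⟫ = ⟪s, x⟫ - R * ⟪s, U₂ x⟫ + (2 * R * A) * ⟪s, U₂ g⟫ := by
      nth_rewrite 2 [hstar]
      rw [inner_add_right, inner_sub_right, inner_smul_right, inner_smul_right]
    have h2 : ⟪s, U₂ x⟫ = ⟪s, x⟫ := by rw [← hadj, hU2s']
    have h3 : ⟪s, U₂ g⟫ = (α : ℂ) := by rw [← hadj, hU2s', hsg]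
    rw [hss, h2, h3] at h1
    linear_combination -h1
  have hRne : (1 : ℂ) - R ≠ 0 := by
    have h5 : ((1 - r : ℝ) : ℂ) ≠ 0 := Complex.ofReal_ne_zero.mpr (by linarith)
    rw [hRdef]; push_cast at h5; exact h5
  have hws : ⟪w, s⟫ = 0 := by
    have h1 : ⟪gp, s⟫ = ⟪w, s⟫ - R * ⟪w, s⟫ := by
      conv_lhs => rw [← hw]
      rw [inner_sub_left, inner_smul_left, Complex.conj_ofReal, hadj, hU2s]
    rw [hgps] at h1
    have h2 : (1 - R) * ⟪w, s⟫ = 0 := by linear_combination -h1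
    rcases mul_eq_zero.mp h2 with h | h
    · exact absurd h hRne
    · exact h
  have hsw : ⟪s, w⟫ = 0 := by rw [← inner_conj_symm s w, hws, map_zero]
  set β := ⟪w, gp⟫ with hβdef
  have hwg : ⟪w, g⟫ = β := by
    conv_lhs => rw [hgdecomp]
    rw [inner_add_right, inner_smul_right, hws, mul_zero, zero_add, hβdef]
  have hgpg : ⟪gp, g⟫ = ((1 - α ^ 2 : ℝ) : ℂ) := by
    conv_lhs => rw [hgdecomp]
    rw [inner_add_right, inner_smul_right, hgps, mul_zero, zero_add, hgpgp]
  have hwU2g : R * ⟪w, U₂ g⟫ = β - ((1 - α ^ 2 : ℝ) : ℂ) := by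
    have h1 : ⟪U₂.symm w, g⟫ = ⟪w, U₂ g⟫ := hadj w g
    have h2 : R • U₂.symm w = w - gp := by rw [← hw]; abel
    calc R * ⟪w, U₂ g⟫ = ⟪R • U₂.symm w, g⟫ := by
          rw [inner_smul_left, Complex.conj_ofReal, h1]
    _ = ⟪w - gp, g⟫ := by rw [h2]
    _ = β - ((1 - α ^ 2 : ℝ) : ℂ) := by rw [inner_sub_left, hwg, hgpg]
  have hgpx : ⟪gp, x⟫ = -2 * A * (β - ((1 - α ^ 2 : ℝ) : ℂ)) := by
    have h2 : R • U₂ x = x + (2 * R * A) • U₂ g - s := by rw [hstar]; abel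
    have h3 : R * ⟪w, U₂ x⟫ = ⟪w, x⟫ + 2 * R * A * ⟪w, U₂ g⟫ := by
      calc R * ⟪w, U₂ x⟫ = ⟪w, R • U₂ x⟫ := by rw [inner_smul_right]
      _ = ⟪w, x⟫ + (2 * R * A) * ⟪w, U₂ g⟫ - ⟪w, s⟫ := by
          rw [h2, inner_sub_right, inner_add_right, inner_smul_right]
      _ = ⟪w, x⟫ + 2 * R * A * ⟪w, U₂ g⟫ := by rw [hws]; ring
    have h4 : ⟪gp, x⟫ = ⟪w, x⟫ - R * ⟪w, U₂ x⟫ := by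
      conv_lhs => rw [← hw]
      rw [inner_sub_left, inner_smul_left, Complex.conj_ofReal, hadj]
    rw [h4]
    linear_combination -h3 - 2 * A * hwU2g
  have hAeq : A = (α : ℂ) * ⟪s, x⟫ + ⟪gp, x⟫ := by
    rw [hAdef]
    conv_lhs => rw [hgdecomp]
    rw [inner_add_left, inner_smul_left, Complex.conj_ofReal]
  set Δc := (1 - R) + 2 * R * (α : ℂ) ^ 2 + 2 * (1 - R) * (β - ((1 - α ^ 2 : ℝ) : ℂ))
    with hΔcdef
  have hkey : A * Δc = (α : ℂ) := by
    rw [hΔcdef]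
    linear_combination (1 - R) * hAeq + (α : ℂ) * hsx + (1 - R) * hgpx
  -- realness of β
  have hJU2 : ∀ z, Jc ψ (U₂ z) = U₂ (Jc ψ z) := by
    intro z
    have hz : U₂ z = ∑ j, ψ.repr z j • U₂ (ψ j) := by
      conv_lhs => rw [← ψ.sum_repr z]
      rw [map_sum]
      exact Finset.sum_congr rfl fun j _ => by rw [map_smul]
    have hz2 : Jc ψ z = ∑ j, (starRingEnd ℂ) (ψ.repr z j) • ψ j := by
      conv_lhs => rw [← ψ.sum_repr (Jc ψ z)]
      exact Finset.sum_congr rfl fun j _ => by rw [Jc_repr]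
    rw [hz, hz2, Jc_sum, map_sum]
    refine Finset.sum_congr rfl fun j _ => ?_
    rw [Jc_smul, map_smul]
    congr 1
    refine Jc_fix ψ _ fun i => ?_
    rw [ψ.repr_apply_apply]
    exact hU2real i j
  have hJU2' : ∀ z, Jc ψ (U₂.symm z) = U₂.symm (Jc ψ z) := by
    intro z
    apply U₂.injective
    rw [← hJU2, U₂.apply_symm_apply, U₂.apply_symm_apply]
  have hJgp : Jc ψ gp = gp := by
    rw [hgpdef, Jc_sub, Jc_smul, hJg, hJs, Complex.conj_ofReal]
  have hJw : Jc ψ w = w := by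
    apply hwuniq
    have h1 : Jc ψ (w - R • U₂.symm w) = Jc ψ w - R • U₂.symm (Jc ψ w) := by
      rw [Jc_sub, Jc_smul, hRdef, Complex.conj_ofReal, hJU2']
    rw [← h1, hw, hJgp]
  have hβim : β.im = 0 := by
    have h1 : (starRingEnd ℂ) β = β := by
      rw [hβdef, ← Jc_inner ψ w gp, hJw, hJgp]
    exact Complex.conj_eq_iff_im.mp h1
  set b := β.re with hbdef
  have hβb : β = (b : ℂ) := Complex.ext (by simp [hbdef]) (by simp [hβim])
  -- quantitative bounds on the denominator
  set W2 := ‖w‖ ^ 2 with hW2def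
  set γ := ⟪w, U₂.symm w⟫ with hγdef
  have hww : ⟪w, w⟫ = ((W2 : ℝ) : ℂ) := by
    rw [inner_self_eq_norm_sq_to_K, hW2def]; norm_cast
  have huu : ⟪U₂.symm w, U₂.symm w⟫ = ((W2 : ℝ) : ℂ) := by
    rw [inner_self_eq_norm_sq_to_K, U₂.symm.norm_map, hW2def]; norm_cast
  have hβcomp : β = ((W2 : ℝ) : ℂ) - R * γ := by
    rw [hβdef]
    conv_lhs => rw [← hw]
    rw [inner_sub_right, inner_smul_right, hww, hγdef]
  have hgpγ : ((1 - α ^ 2 : ℝ) : ℂ) =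
      ((W2 : ℝ) : ℂ) - R * γ - R * (starRingEnd ℂ) γ + R * R * ((W2 : ℝ) : ℂ) := by
    rw [← hgpgp]
    conv_lhs => rw [← hw]
    rw [inner_sub_left, inner_sub_right, inner_sub_right, inner_smul_left, inner_smul_right,
      inner_smul_left, inner_smul_right, Complex.conj_ofReal, hww, huu, hγdef,
      ← inner_conj_symm w (U₂.symm w), Complex.conj_conj]
    ring
  have hre1 : (1 - α ^ 2 : ℝ) = (1 + r ^ 2) * W2 - 2 * r * γ.re := by
    have h5 := congrArg Complex.re hgpγ
    simp only [Complex.sub_re, Complex.add_re, Complex.mul_re, Complex.ofReal_re,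
      Complex.ofReal_im, Complex.conj_re, Complex.conj_im, hRdef] at h5
    ring_nf at h5 ⊢
    linarith
  have hbval : b = ((1 - r ^ 2) * W2 + (1 - α ^ 2)) / 2 := by
    have h6 := congrArg Complex.re hβcomp
    simp only [hRdef, Complex.sub_re, Complex.mul_re, Complex.ofReal_re, Complex.ofReal_im,
      zero_mul, sub_zero] at h6
    -- h6 : β.re = W2 - r * γ.re
    have e2 : (1 + r ^ 2) * W2 = W2 + r ^ 2 * W2 := by ring
    have e3 : (1 - r ^ 2) * W2 = W2 - r ^ 2 * W2 := by ring
    rw [hbdef]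
    linear_combination h6 - hre1 / 2
  have hΔreal : Δc = (((1 - r) * (α ^ 2 + (1 - r ^ 2) * W2) + 2 * r * α ^ 2 : ℝ) : ℂ) := by
    have h7 : (1 - r) + 2 * r * α ^ 2 + 2 * (1 - r) * (b - (1 - α ^ 2))
        = (1 - r) * (α ^ 2 + (1 - r ^ 2) * W2) + 2 * r * α ^ 2 := by
      rw [hbval]; ring
    calc Δc = (((1 - r) + 2 * r * α ^ 2 + 2 * (1 - r) * (b - (1 - α ^ 2)) : ℝ) : ℂ) := by
          rw [hΔcdef, hβb, hRdef]; push_cast; ring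
    _ = _ := by rw [h7]
  set Δr := (1 - r) * (α ^ 2 + (1 - r ^ 2) * W2) + 2 * r * α ^ 2 with hΔrdef
  have hW2nonneg : 0 ≤ W2 := by rw [hW2def]; positivity
  -- numerical range bound
  have heig' : ∀ (μ : ℂ) (v : EuclideanSpace ℂ (Fin m)), v ≠ 0 → U₂ v = μ • v →
      ⟪s, v⟫ = 0 → μ.re ≤ Real.cos σ := by
    intro μ v hv0 hUv hsv
    obtain ⟨θ, hθ1, hθ2, hθ3⟩ := heig μ v hv0 hUv hsv
    rw [hθ3, Complex.exp_ofReal_mul_I_re]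
    exact aux_cos hσ0 hσπ hθ1 hθ2
  have hγre : γ.re ≤ Real.cos σ * W2 := by
    have hsw'' : ⟪s, U₂.symm w⟫ = 0 := by
      rw [← hadj2, hU2s, hsw]
    have hnr := aux_numrange U₂ s (Real.cos σ) hU2s heig' (U₂.symm w) hsw''
    have h8 : ⟪U₂.symm w, U₂ (U₂.symm w)⟫ = (starRingEnd ℂ) γ := by
      rw [U₂.apply_symm_apply, hγdef, inner_conj_symm]
    rw [h8, U₂.symm.norm_map] at hnr
    rw [Complex.conj_re] at hnr
    rw [hW2def]
    exact hnr
  have hW2le : W2 ≤ 1 / q := by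
    have h9 : q * W2 ≤ 1 := by
      have c2 : 2 * r * γ.re ≤ 2 * r * (Real.cos σ * W2) :=
        mul_le_mul_of_nonneg_left hγre (by linarith)
      have c3 : 0 ≤ (1 - r) ^ 2 * W2 := mul_nonneg (sq_nonneg _) hW2nonneg
      have c4 : 0 ≤ (2 * r - 1) * (q * W2) :=
        mul_nonneg (by linarith) (mul_nonneg hq.le hW2nonneg)
      have c5 : q * W2 = W2 - Real.cos σ * W2 := by rw [hqdef]; ring
      have c6 : r * (q * W2) = r * W2 - r * (Real.cos σ * W2) := by rw [hqdef]; ring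
      have eA : (1 + r ^ 2) * W2 = W2 + r ^ 2 * W2 := by ring
      have eB : (1 - r) ^ 2 * W2 = W2 - 2 * (r * W2) + r ^ 2 * W2 := by ring
      have eC : (2 * r - 1) * (q * W2) = 2 * (r * (q * W2)) - q * W2 := by ring
      linarith only [hre1, c2, c3, c4, c5, c6, sq_nonneg α, eA, eB, eC]
    rw [le_div_iff₀ hq]; linarith
  have hΔrpos : 0 < Δr := by
    rw [hΔrdef]
    have h10 : 0 < 1 - r := by rw [hrdef]; linarith
    have p0 : 0 ≤ 1 - r ^ 2 := by nlinarith [hr0, hr1]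
    have p1 : 0 ≤ (1 - r) * α ^ 2 := mul_nonneg h10.le (sq_nonneg _)
    have p2 : 0 ≤ (1 - r) * ((1 - r ^ 2) * W2) :=
      mul_nonneg h10.le (mul_nonneg p0 hW2nonneg)
    have p3 : 0 < 2 * r * α ^ 2 := by
      have h1 := pow_pos hα0 2
      have h2 : 0 ≤ (2 * r - 1) * α ^ 2 := mul_nonneg (by linarith) (sq_nonneg α)
      linarith only [h1, h2]
    have e : (1 - r) * (α ^ 2 + (1 - r ^ 2) * W2)
        = (1 - r) * α ^ 2 + (1 - r) * ((1 - r ^ 2) * W2) := by ring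
    linarith only [e, p1, p2, p3]
  have hΔrle : Δr ≤ α ^ 2 * K := by
    clear_value α q K r W2 Δr
    have e0 : 1 - r = α := by rw [hrdef]; ring
    have e1 : 1 - r ^ 2 ≤ 2 * α := by
      rw [hrdef]; nlinarith [sq_nonneg α]
    have e1' : 0 ≤ 1 - r ^ 2 := by nlinarith [hr1, hr0, sq_nonneg r]
    have e2 : (1 - r ^ 2) * W2 ≤ 2 * α * (1 / q) :=
      mul_le_mul e1 hW2le hW2nonneg (by linarith)
    have e3 : α * ((1 - r ^ 2) * W2) ≤ α * (2 * α * (1 / q)) :=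
      mul_le_mul_of_nonneg_left e2 hα0.le
    have e4 : α * (2 * α * (1 / q)) = α ^ 2 * (2 / q) := by
      field_simp
    have e5 : α ^ 3 ≤ α ^ 2 := by
      have := mul_nonneg (sq_nonneg α) (show (0:ℝ) ≤ 1 - α by linarith)
      nlinarith [this]
    rw [hΔrdef, e0, hKdef]
    have e6 : α * (α ^ 2 + (1 - r ^ 2) * W2) = α ^ 3 + α * ((1 - r ^ 2) * W2) := by ring
    have e7 : 2 * r * α ^ 2 ≤ 2 * α ^ 2 := by
      have := mul_nonneg (show (0:ℝ) ≤ 1 - r by linarith) (sq_nonneg α)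
      nlinarith [this]
    have e8 : α ^ 2 * (3 + 2 / q) = α ^ 2 * 3 + α ^ 2 * (2 / q) := by ring
    linarith only [e3, e4, e5, e6, e7, e8]
  have hΔrne : Δr ≠ 0 := ne_of_gt hΔrpos
  have hAval : A = ((α / Δr : ℝ) : ℂ) := by
    have h10 : A * ((Δr : ℝ) : ℂ) = (α : ℂ) := by rw [← hΔreal]; exact hkey
    rw [Complex.ofReal_div, eq_div_iff (Complex.ofReal_ne_zero.mpr hΔrne)]
    exact h10
  have hAnorm : ‖A‖ = α / Δr := by
    rw [hAval, Complex.norm_real, Real.norm_eq_abs, _root_.abs_of_pos (div_pos hα0 hΔrpos)]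
  have hAlow : 1 / (α * K) ≤ ‖A‖ := by
    rw [hAnorm, div_le_div_iff₀ (by positivity) hΔrpos]
    have : α * (α * K) = α ^ 2 * K := by ring
    linarith only [hΔrle, this]
  -- iterates and partial sums
  set f : EuclideanSpace ℂ (Fin m) → EuclideanSpace ℂ (Fin m) := fun x => U₂ (U₁ x) with hfdef
  have hfapp : ∀ y, f y = (U₁.trans U₂) y := by
    intro y; rw [LinearIsometryEquiv.trans_apply]
  have hfit_norm : ∀ (n : ℕ) y, ‖f^[n] y‖ = ‖y‖ := by
    intro n
    induction n with
    | zero => intro y; simp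
    | succ k ih =>
      intro y
      rw [Function.iterate_succ_apply, ih (f y), hfapp, (U₁.trans U₂).norm_map]
  have hfit_add : ∀ (n : ℕ) a c, f^[n] (a + c) = f^[n] a + f^[n] c := by
    intro n
    induction n with
    | zero => intro a c; simp
    | succ k ih =>
      intro a c
      rw [Function.iterate_succ_apply', Function.iterate_succ_apply',
        Function.iterate_succ_apply', ih, hfapp, hfapp, hfapp, map_add]
  have hfit_smul : ∀ (n : ℕ) (c : ℂ) a, f^[n] (c • a) = c • f^[n] a := by
    intro n
    induction n with
    | zero => intro c a; simp
    | succ k ih =>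
      intro c a
      rw [Function.iterate_succ_apply', Function.iterate_succ_apply', ih, hfapp, hfapp, map_smul]
  have hxs : x = s + R • f x := by
    rw [← hx]
    rw [hfapp]
    abel
  have hgeo : ∀ N, x = (∑ t ∈ Finset.range N, R ^ t • f^[t] s) + R ^ N • f^[N] x := by
    intro N
    induction N with
    | zero => simp
    | succ n ih =>
      rw [Finset.sum_range_succ]
      have h11 : f^[n] x = f^[n] s + R • f^[n + 1] x := by
        conv_lhs => rw [hxs]
        rw [hfit_add, hfit_smul, ← Function.iterate_succ_apply]
      conv_lhs => rw [ih]
      rw [h11, smul_add, smul_smul, ← pow_succ]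
      abel
  have hAsum : A = (∑ t ∈ Finset.range (⌊Real.log (4 * K) / α⌋₊ + 1),
      R ^ t * ⟪g, f^[t] s⟫) + R ^ (⌊Real.log (4 * K) / α⌋₊ + 1)
        * ⟪g, f^[⌊Real.log (4 * K) / α⌋₊ + 1] x⟫ := by
    rw [hAdef]
    conv_lhs => rw [hgeo (⌊Real.log (4 * K) / α⌋₊ + 1)]
    rw [inner_add_right, inner_smul_right, inner_sum]
    congr 1
    exact Finset.sum_congr rfl fun t _ => by rw [inner_smul_right]
  have hxnorm : ‖x‖ ≤ 1 / α := by
    have h12 : ‖x‖ ≤ 1 + r * ‖x‖ := by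
      conv_lhs => rw [hxs]
      refine (norm_add_le _ _).trans ?_
      rw [hs1, norm_smul, hRdef, Complex.norm_real, Real.norm_eq_abs, _root_.abs_of_nonneg hr0]
      have h13 : ‖f x‖ = ‖x‖ := by rw [hfapp, (U₁.trans U₂).norm_map]
      rw [h13]
    rw [le_div_iff₀ hα0]
    have er : r * ‖x‖ = ‖x‖ - α * ‖x‖ := by rw [hrdef]; ring
    linarith only [h12, er]
  by_contra hcon
  push_neg at hcon
  set T := ⌊Real.log (4 * K) / α⌋₊ with hTdef
  have hsmall : ∀ t ≤ T, ‖⟪g, f^[t] s⟫‖ ≤ 1 / (4 * K) := by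
    intro t ht
    refine (hcon t ?_).le
    calc (t : ℝ) ≤ T := by exact_mod_cast ht
    _ ≤ _ := Nat.floor_le (div_nonneg (Real.log_pos (by linarith)).le hα0.le)
  have hAup : ‖A‖ ≤ (∑ t ∈ Finset.range (T + 1), r ^ t * (1 / (4 * K)))
      + r ^ (T + 1) * (1 / α) := by
    rw [hAsum]
    refine (norm_add_le _ _).trans (add_le_add ?_ ?_)
    · refine (norm_sum_le _ _).trans (Finset.sum_le_sum fun t ht => ?_)
      rw [norm_mul, norm_pow, hRdef, Complex.norm_real, Real.norm_eq_abs, _root_.abs_of_nonneg hr0]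
      have ht' : t ≤ T := Nat.lt_succ_iff.mp (Finset.mem_range.mp ht)
      exact mul_le_mul_of_nonneg_left (hsmall t ht') (pow_nonneg hr0 _)
    · rw [norm_mul, norm_pow, hRdef, Complex.norm_real, Real.norm_eq_abs, _root_.abs_of_nonneg hr0]
      refine mul_le_mul_of_nonneg_left ?_ (pow_nonneg hr0 _)
      calc ‖⟪g, f^[T + 1] x⟫‖ ≤ ‖g‖ * ‖f^[T + 1] x‖ := norm_inner_le_norm _ _
      _ = ‖x‖ := by rw [hg1, one_mul, hfit_norm]
      _ ≤ 1 / α := hxnorm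
  have hgeosum : (∑ t ∈ Finset.range (T + 1), r ^ t) ≤ 1 / α := by
    have h13 := geom_sum_mul r (T + 1)
    have h14 : (∑ t ∈ Finset.range (T + 1), r ^ t) * (1 - r) = 1 - r ^ (T + 1) := by
      linear_combination -h13
    have hrN : 0 ≤ r ^ (T + 1) := pow_nonneg hr0 _
    have h15 : 1 - r = α := by rw [hrdef]; ring
    rw [le_div_iff₀ hα0, ← h15, h14]
    linarith
  have hrT : r ^ (T + 1) ≤ 1 / (4 * K) := by
    have h16 : r ≤ Real.exp (-α) := by
      have := Real.add_one_le_exp (-α)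
      rw [hrdef]; linarith
    have h17 : r ^ (T + 1) ≤ Real.exp (-α) ^ (T + 1) := pow_le_pow_left₀ hr0 h16 _
    have h18 : Real.exp (-α) ^ (T + 1) = Real.exp (-(α * (T + 1))) := by
      rw [← Real.exp_nat_mul]; congr 1; push_cast; ring
    have h20 := Nat.lt_floor_add_one (Real.log (4 * K) / α)
    have h19 : Real.log (4 * K) ≤ α * (T + 1) := by
      have h21 : Real.log (4 * K) / α < (T : ℝ) + 1 := by
        rw [hTdef]; exact_mod_cast h20
      have h22 := (div_lt_iff₀ hα0).mp h21
      have : ((T : ℝ) + 1) * α = α * ((T : ℝ) + 1) := by ring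
      linarith only [h22, this]
    have h23 : Real.exp (-(α * (T + 1))) ≤ Real.exp (-Real.log (4 * K)) :=
      Real.exp_le_exp.mpr (by push_cast; linarith)
    have h24 : Real.exp (-Real.log (4 * K)) = 1 / (4 * K) := by
      rw [Real.exp_neg, Real.exp_log (by linarith : (0 : ℝ) < 4 * K), one_div]
    calc r ^ (T + 1) ≤ Real.exp (-α) ^ (T + 1) := h17
    _ = Real.exp (-(α * (T + 1))) := h18
    _ ≤ Real.exp (-Real.log (4 * K)) := h23
    _ = 1 / (4 * K) := h24
  have hfinal : ‖A‖ ≤ 1 / (2 * K) * (1 / α) := by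
    have hs1' : (∑ t ∈ Finset.range (T + 1), r ^ t * (1 / (4 * K)))
        = (∑ t ∈ Finset.range (T + 1), r ^ t) * (1 / (4 * K)) := by
      rw [Finset.sum_mul]
    have h25 : (∑ t ∈ Finset.range (T + 1), r ^ t) * (1 / (4 * K)) ≤ (1 / α) * (1 / (4 * K)) :=
      mul_le_mul_of_nonneg_right hgeosum (by positivity)
    have h26 : r ^ (T + 1) * (1 / α) ≤ (1 / (4 * K)) * (1 / α) :=
      mul_le_mul_of_nonneg_right hrT (by positivity)
    calc ‖A‖ ≤ _ := hAup
    _ ≤ (1 / α) * (1 / (4 * K)) + (1 / (4 * K)) * (1 / α) := by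
        rw [hs1']; exact add_le_add h25 h26
    _ = 1 / (2 * K) * (1 / α) := by field_simp; ring
  have hcontr := le_trans hAlow hfinal
  have h27 : 1 / (2 * K) * (1 / α) = 1 / (2 * K * α) := by
    field_simp
  rw [h27, div_le_div_iff₀ (by positivity) (by positivity)] at hcontr
  have hp := mul_pos hα0 hK0
  have e9 : 1 * (2 * K * α) = 2 * (α * K) := by ring
  have e10 : 1 * (α * K) = α * K := by ring
  linarith only [hcontr, hp, e9, e10]
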